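/- arXiv:1902.02564 — 2 statements merged into one kernel-verified Lean document; each statement's English description precedes it below -/
import Mathlib

section
/- Let α ∈ (1/2, 1), t > 0, and let y : [0,t] → [0,∞) be measurable with ∫₀ᵗ ω_{2α−1}(t−s)·y(s)² ds < ∞. Then (∫₀ᵗ ω_α(t−s)·ω_α(s)·y(s) ds)² ≤ (Γ(2α−1)·t^{2α−1}/((2α−1)·Γ(α)⁴))·∫₀ᵗ ω_{2α−1}(t−s)·y(s)² ds. -/
open MeasureTheory Set

/-- `ω β t = t^(β-1)/Γ(β)`. -/
noncomputable def omega (β t : ℝ) : ℝ := t ^ (β - 1) / Real.Gamma β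

/-- Weighted Cauchy--Schwarz estimate from the proof of Lemma 6.2:
`(∫₀ᵗ ω_α(t-s) ω_α(s) y(s) ds)² ≤ (Γ(2α-1) t^{2α-1}/((2α-1)Γ(α)⁴)) ∫₀ᵗ ω_{2α-1}(t-s) y(s)² ds`. -/
theorem weighted_cauchy_schwarz_omega
    (α t : ℝ) (hα : α ∈ Ioo (1/2 : ℝ) 1) (ht : 0 < t)
    (y : ℝ → ℝ) (hy : Measurable y) (hy0 : ∀ s ∈ Icc (0:ℝ) t, 0 ≤ y s)
    (hInt : IntegrableOn (fun s => omega (2 * α - 1) (t - s) * y s ^ 2) (Ioc 0 t)) :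
    (∫ s in Ioc (0:ℝ) t, omega α (t - s) * omega α s * y s) ^ 2 ≤
      (Real.Gamma (2 * α - 1) * t ^ (2 * α - 1) / ((2 * α - 1) * Real.Gamma α ^ 4)) *
        ∫ s in Ioc (0:ℝ) t, omega (2 * α - 1) (t - s) * y s ^ 2 := by
  obtain ⟨hα1, hα2⟩ := hα
  have hαpos : 0 < α := lt_trans (by norm_num) hα1
  have h2α : 0 < 2 * α - 1 := by linarith
  have hΓα : 0 < Real.Gamma α := Real.Gamma_pos_of_pos hαpos
  have hΓ2 : 0 < Real.Gamma (2 * α - 1) := Real.Gamma_pos_of_pos h2α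
  set μ : Measure ℝ := volume.restrict (Ioc 0 t) with hμ
  set F : ℝ → ℝ := fun s => (t - s) ^ (α - 1) * y s with hF
  set G : ℝ → ℝ := fun s => s ^ (α - 1) / Real.Gamma α ^ 2 with hG
  have hmem : ∀ᵐ s ∂μ, s ∈ Ioc (0:ℝ) t := ae_restrict_mem measurableSet_Ioc
  -- key pointwise identities on Ioc 0 t
  have hFG : ∀ s ∈ Ioc (0:ℝ) t,
      omega α (t - s) * omega α s * y s = F s * G s := by
    intro s hs
    simp only [omega, hF, hG]
    ring
  have hF2 : ∀ s ∈ Ioc (0:ℝ) t,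
      F s ^ 2 = Real.Gamma (2 * α - 1) * (omega (2 * α - 1) (t - s) * y s ^ 2) := by
    intro s hs
    have hts : (0:ℝ) ≤ t - s := sub_nonneg.2 hs.2
    have hrw : ((t - s) ^ (α - 1)) ^ 2 = (t - s) ^ (2 * α - 1 - 1) := by
      rw [← Real.rpow_natCast ((t - s) ^ (α - 1)) 2, ← Real.rpow_mul hts]
      norm_num
      ring_nf
    simp only [hF, omega, mul_pow]
    rw [hrw]
    field_simp
  have hG2 : ∀ s ∈ Ioc (0:ℝ) t,
      G s ^ 2 = s ^ (2 * α - 1 - 1) / Real.Gamma α ^ 4 := by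
    intro s hs
    have hrw : (s ^ (α - 1)) ^ 2 = s ^ (2 * α - 1 - 1) := by
      rw [← Real.rpow_natCast (s ^ (α - 1)) 2, ← Real.rpow_mul hs.1.le]
      norm_num
      ring_nf
    simp only [hG, div_pow]
    rw [hrw]
    congr 1
    ring
  -- nonnegativity
  have hFnn : 0 ≤ᵐ[μ] F := by
    filter_upwards [hmem] with s hs
    exact mul_nonneg (Real.rpow_nonneg (sub_nonneg.2 hs.2) _)
      (hy0 s ⟨hs.1.le, hs.2⟩)
  have hGnn : 0 ≤ᵐ[μ] G := by
    filter_upwards [hmem] with s hs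
    exact div_nonneg (Real.rpow_nonneg hs.1.le _) (by positivity)
  -- measurability
  have hFm : AEStronglyMeasurable F μ := by
    apply Measurable.aestronglyMeasurable
    fun_prop
  have hGm : AEStronglyMeasurable G μ := by
    apply Measurable.aestronglyMeasurable
    fun_prop
  -- integrability of squares
  have hF2int : Integrable (fun s => F s ^ 2) μ := by
    refine ((hInt.const_mul (Real.Gamma (2 * α - 1))).congr ?_)
    filter_upwards [hmem] with s hs
    exact (hF2 s hs).symm
  have hG2int : Integrable (fun s => G s ^ 2) μ := by
    have hr : (-1:ℝ) < 2 * α - 1 - 1 := by linarith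
    have h1 : IntervalIntegrable (fun s : ℝ => s ^ (2 * α - 1 - 1)) volume 0 t :=
      intervalIntegral.intervalIntegrable_rpow' hr
    have h2 : IntegrableOn (fun s : ℝ => s ^ (2 * α - 1 - 1)) (Ioc 0 t) := h1.1
    refine (h2.div_const (Real.Gamma α ^ 4)).congr ?_
    filter_upwards [hmem] with s hs
    exact (hG2 s hs).symm
  have hofReal2 : ENNReal.ofReal (2:ℝ) = 2 := by
    norm_num
  have hFmem : MemLp F (ENNReal.ofReal 2) μ := by
    rw [hofReal2]
    exact (memLp_two_iff_integrable_sq hFm).2 hF2int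
  have hGmem : MemLp G (ENNReal.ofReal 2) μ := by
    rw [hofReal2]
    exact (memLp_two_iff_integrable_sq hGm).2 hG2int
  have h22 : (2:ℝ).HolderConjugate 2 := Real.HolderConjugate.two_two
  have hCS := MeasureTheory.integral_mul_le_Lp_mul_Lq_of_nonneg h22 hFnn hGnn hFmem hGmem
  -- rewrite rpow 2 as pow 2
  have hpow2 : ∀ x : ℝ, x ^ (2:ℝ) = x ^ 2 := fun x => by
    rw [show (2:ℝ) = ((2:ℕ):ℝ) by norm_num, Real.rpow_natCast]
  simp only [hpow2] at hCS
  -- identify LHS integral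
  have hLHS : ∫ s in Ioc (0:ℝ) t, omega α (t - s) * omega α s * y s
      = ∫ s, F s * G s ∂μ := by
    refine integral_congr_ae ?_
    filter_upwards [hmem] with s hs
    exact hFG s hs
  -- compute ∫ F²
  have hIF : ∫ s, F s ^ 2 ∂μ
      = Real.Gamma (2 * α - 1) * ∫ s in Ioc (0:ℝ) t, omega (2 * α - 1) (t - s) * y s ^ 2 := by
    rw [← integral_const_mul]
    refine integral_congr_ae ?_
    filter_upwards [hmem] with s hs
    exact hF2 s hs
  -- compute ∫ G²
  have hIG : ∫ s, G s ^ 2 ∂μ = t ^ (2 * α - 1) / ((2 * α - 1) * Real.Gamma α ^ 4) := by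
    have h1 : ∫ s, G s ^ 2 ∂μ = (∫ s in Ioc (0:ℝ) t, s ^ (2 * α - 1 - 1)) / Real.Gamma α ^ 4 := by
      rw [← integral_div]
      refine integral_congr_ae ?_
      filter_upwards [hmem] with s hs
      exact hG2 s hs
    have h2 : ∫ s in Ioc (0:ℝ) t, s ^ (2 * α - 1 - 1)
        = t ^ (2 * α - 1) / (2 * α - 1) := by
      rw [← intervalIntegral.integral_of_le ht.le]
      rw [integral_rpow (Or.inl (by linarith : (-1:ℝ) < 2 * α - 1 - 1))]
      rw [Real.zero_rpow (by linarith : 2 * α - 1 - 1 + 1 ≠ 0)]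
      ring_nf
    rw [h1, h2]
    field_simp
  -- nonnegativity of the three integrals
  have hIFGnn : 0 ≤ ∫ s, F s * G s ∂μ := by
    refine integral_nonneg_of_ae ?_
    filter_upwards [hFnn, hGnn] with s h1 h2
    exact mul_nonneg h1 h2
  have hIFnn : 0 ≤ ∫ s, F s ^ 2 ∂μ := integral_nonneg_of_ae <| by
    filter_upwards with s; positivity
  have hIGnn : 0 ≤ ∫ s, G s ^ 2 ∂μ := integral_nonneg_of_ae <| by
    filter_upwards with s; positivity
  -- square Cauchy-Schwarz
  have hsq : (∫ s, F s * G s ∂μ) ^ 2 ≤ (∫ s, F s ^ 2 ∂μ) * (∫ s, G s ^ 2 ∂μ) := by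
    calc (∫ s, F s * G s ∂μ) ^ 2
        ≤ ((∫ s, F s ^ 2 ∂μ) ^ (1/(2:ℝ)) * (∫ s, G s ^ 2 ∂μ) ^ (1/(2:ℝ))) ^ 2 :=
          pow_le_pow_left₀ hIFGnn hCS 2
      _ = (∫ s, F s ^ 2 ∂μ) * (∫ s, G s ^ 2 ∂μ) := by
          rw [mul_pow, ← Real.rpow_natCast ((∫ s, F s ^ 2 ∂μ) ^ (1/(2:ℝ))) 2,
            ← Real.rpow_natCast ((∫ s, G s ^ 2 ∂μ) ^ (1/(2:ℝ))) 2,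
            ← Real.rpow_mul hIFnn, ← Real.rpow_mul hIGnn]
          norm_num
  rw [hLHS]
  calc (∫ s, F s * G s ∂μ) ^ 2
      ≤ (∫ s, F s ^ 2 ∂μ) * (∫ s, G s ^ 2 ∂μ) := hsq
    _ = (Real.Gamma (2 * α - 1) * t ^ (2 * α - 1) / ((2 * α - 1) * Real.Gamma α ^ 4)) *
        ∫ s in Ioc (0:ℝ) t, omega (2 * α - 1) (t - s) * y s ^ 2 := by
          rw [hIF, hIG]; ring
end

section
/- Let X be a real Banach space, α ∈ (0,1), T > 0, and let w : [0,T] → X be continuous. Suppose J^α w and J^α(s ↦ s·w(s)) are differentiable at a point t ∈ (0,T). Then (d/dt) J^α(s ↦ s·w(s))(t) = t·(d/dt)(J^α w)(t) + (1−α)·(J^α w)(t). -/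
open MeasureTheory Set
open Filter Topology

set_option linter.unusedSectionVars false

/-- Riemann--Liouville fractional integral `J^β w (t) = ∫₀ᵗ ω_β(t-s) w(s) ds`
with `ω_β(t) = t^(β-1)/Γ(β)`. -/
noncomputable def fracInt {X : Type*} [NormedAddCommGroup X] [NormedSpace ℝ X]
    (β : ℝ) (w : ℝ → X) (t : ℝ) : X :=
  ∫ s in Ioc (0:ℝ) t, ((t - s) ^ (β - 1) / Real.Gamma β) • w s

section Aux

variable {X : Type*} [NormedAddCommGroup X] [NormedSpace ℝ X] [CompleteSpace X]

lemma integrableOn_rpow_sub {r τ : ℝ} (hr : -1 < r) (hτ : 0 ≤ τ) :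
    IntegrableOn (fun s => (τ - s) ^ r) (Ioc 0 τ) := by
  have h := (intervalIntegral.intervalIntegrable_rpow' (a := 0) (b := τ) hr).comp_sub_left τ
  rw [sub_zero, sub_self] at h
  rw [← intervalIntegrable_iff_integrableOn_Ioc_of_le hτ]
  exact h.symm

lemma integral_rpow_sub {r τ : ℝ} (hr : -1 < r) (hτ : 0 ≤ τ) :
    ∫ s in Ioc 0 τ, (τ - s) ^ r = τ ^ (r + 1) / (r + 1) := by
  rw [← intervalIntegral.integral_of_le hτ,
    intervalIntegral.integral_comp_sub_left (fun x : ℝ => x ^ r) τ, sub_zero, sub_self,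
    integral_rpow (Or.inl hr), Real.zero_rpow (by linarith), sub_zero]

lemma integrableOn_kernel_smul {T M c r : ℝ} {w : ℝ → X} (hw : ContinuousOn w (Icc 0 T))
    (hM : ∀ x ∈ Icc 0 T, ‖w x‖ ≤ M) (hc : 0 < c) (hr : -1 < r)
    {τ : ℝ} (hτ0 : 0 ≤ τ) (hτT : τ ≤ T) :
    IntegrableOn (fun s => ((τ - s) ^ r / c) • w s) (Ioc 0 τ) := by
  have hsub : Ioc 0 τ ⊆ Icc 0 T := fun x hx => ⟨hx.1.le, hx.2.trans hτT⟩
  have hwm : AEStronglyMeasurable w (volume.restrict (Ioc 0 τ)) :=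
    (hw.mono hsub).aestronglyMeasurable measurableSet_Ioc
  have hsm : AEStronglyMeasurable (fun s => ((τ - s) ^ r / c) • w s)
      (volume.restrict (Ioc 0 τ)) := by
    refine AEStronglyMeasurable.smul ?_ hwm
    exact (((measurable_const.sub measurable_id).pow_const r).div_const c).aestronglyMeasurable
  refine Integrable.mono' ((integrableOn_rpow_sub hr hτ0).mul_const (M / c)) hsm ?_
  filter_upwards [ae_restrict_mem measurableSet_Ioc] with s hs
  have h1 : (0:ℝ) ≤ (τ - s) ^ r := Real.rpow_nonneg (by linarith [hs.2]) r
  rw [norm_smul, Real.norm_eq_abs, abs_of_nonneg (div_nonneg h1 hc.le)]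
  calc (τ - s) ^ r / c * ‖w s‖ ≤ (τ - s) ^ r / c * M := by
        exact mul_le_mul_of_nonneg_left (hM s (hsub hs)) (div_nonneg h1 hc.le)
    _ = (τ - s) ^ r * (M / c) := by ring

lemma norm_integral_kernel_le {T M c r : ℝ} {w : ℝ → X} (hw : ContinuousOn w (Icc 0 T))
    (hM : ∀ x ∈ Icc 0 T, ‖w x‖ ≤ M) (hc : 0 < c) (hr : -1 < r)
    {τ : ℝ} (hτ0 : 0 ≤ τ) (hτT : τ ≤ T) :
    ‖∫ s in Ioc 0 τ, ((τ - s) ^ r / c) • w s‖ ≤ M / c * (τ ^ (r + 1) / (r + 1)) := by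
  have hsub : Ioc 0 τ ⊆ Icc 0 T := fun x hx => ⟨hx.1.le, hx.2.trans hτT⟩
  have h := norm_integral_le_of_norm_le (G := X)
    (μ := volume.restrict (Ioc 0 τ)) (f := fun s => ((τ - s) ^ r / c) • w s)
    (g := fun s => (τ - s) ^ r * (M / c))
    ((integrableOn_rpow_sub hr hτ0).mul_const (M / c)) ?_
  · calc ‖∫ s in Ioc 0 τ, ((τ - s) ^ r / c) • w s‖
        ≤ ∫ s in Ioc 0 τ, (τ - s) ^ r * (M / c) := h
      _ = (τ ^ (r + 1) / (r + 1)) * (M / c) := by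
          rw [MeasureTheory.integral_mul_const, integral_rpow_sub hr hτ0]
      _ = M / c * (τ ^ (r + 1) / (r + 1)) := by ring
  · filter_upwards [ae_restrict_mem measurableSet_Ioc] with s hs
    have h1 : (0:ℝ) ≤ (τ - s) ^ r := Real.rpow_nonneg (by linarith [hs.2]) r
    rw [norm_smul, Real.norm_eq_abs, abs_of_nonneg (div_nonneg h1 hc.le)]
    calc (τ - s) ^ r / c * ‖w s‖ ≤ (τ - s) ^ r / c * M :=
          mul_le_mul_of_nonneg_left (hM s (hsub hs)) (div_nonneg h1 hc.le)
      _ = (τ - s) ^ r * (M / c) := by ring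

end Aux

section Main

variable {X : Type*} [NormedAddCommGroup X] [NormedSpace ℝ X] [CompleteSpace X]

lemma fracInt_mul_eq {α T : ℝ} (hα : α ∈ Ioo (0:ℝ) 1) {w : ℝ → X}
    (hw : ContinuousOn w (Icc 0 T)) {τ : ℝ} (hτ0 : 0 < τ) (hτT : τ ≤ T) :
    fracInt α (fun s => s • w s) τ = τ • fracInt α w τ - α • fracInt (α + 1) w τ := by
  obtain ⟨M, hM⟩ := isCompact_Icc.exists_bound_of_continuousOn hw
  have hΓ : 0 < Real.Gamma α := Real.Gamma_pos_of_pos hα.1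
  have hΓ1 : Real.Gamma (α + 1) = α * Real.Gamma α := Real.Gamma_add_one (ne_of_gt hα.1)
  have hΓ1' : 0 < Real.Gamma (α + 1) := by rw [hΓ1]; exact mul_pos hα.1 hΓ
  have hr1 : (-1:ℝ) < α - 1 := by linarith [hα.1]
  have hr2 : (-1:ℝ) < α + 1 - 1 := by linarith [hα.1]
  have hI1 : IntegrableOn (fun s => ((τ - s) ^ (α - 1) / Real.Gamma α) • w s) (Ioc 0 τ) :=
    integrableOn_kernel_smul hw hM hΓ hr1 hτ0.le hτT
  have hI2 : IntegrableOn (fun s => ((τ - s) ^ (α + 1 - 1) / Real.Gamma (α + 1)) • w s)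
      (Ioc 0 τ) := integrableOn_kernel_smul hw hM hΓ1' hr2 hτ0.le hτT
  unfold fracInt
  have h1 : (∫ s in Ioc 0 τ, ((τ - s) ^ (α - 1) / Real.Gamma α) • ((fun s => s • w s) s))
      = ∫ s in Ioc 0 τ, (τ • (((τ - s) ^ (α - 1) / Real.Gamma α) • w s)
        - α • (((τ - s) ^ (α + 1 - 1) / Real.Gamma (α + 1)) • w s)) := by
    refine setIntegral_congr_fun measurableSet_Ioc fun s hs => ?_
    have key : (τ - s) ^ (α + 1 - 1) = (τ - s) ^ (α - 1) * (τ - s) := by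
      rcases eq_or_lt_of_le hs.2 with h | h
      · rw [h]; simp [Real.zero_rpow (by linarith [hα.1] : α + 1 - 1 ≠ 0),
          Real.zero_rpow (ne_of_gt hα.1)]
      · rw [show α + 1 - 1 = (α - 1) + 1 by ring, Real.rpow_add_one (by linarith : τ - s ≠ 0)]
    simp only [smul_smul, ← sub_smul]
    congr 1
    rw [key, hΓ1]
    field_simp [hα.1.ne', hΓ.ne']
    ring
  have hI1' : Integrable (fun s => τ • (((τ - s) ^ (α - 1) / Real.Gamma α) • w s))
      (volume.restrict (Ioc 0 τ)) := hI1.smul τ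
  have hI2' : Integrable (fun s => α • (((τ - s) ^ (α + 1 - 1) / Real.Gamma (α + 1)) • w s))
      (volume.restrict (Ioc 0 τ)) := hI2.smul α
  rw [h1, integral_sub hI1' hI2', integral_smul, integral_smul]

lemma continuousAt_fracInt {α T : ℝ} (hα : α ∈ Ioo (0:ℝ) 1) {w : ℝ → X}
    (hw : ContinuousOn w (Icc 0 T)) {t : ℝ} (ht : t ∈ Ioo (0:ℝ) T) :
    ContinuousAt (fracInt α w) t := by
  obtain ⟨M, hM⟩ := isCompact_Icc.exists_bound_of_continuousOn hw
  have hΓ : 0 < Real.Gamma α := Real.Gamma_pos_of_pos hα.1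
  have hT : 0 < T := lt_trans ht.1 ht.2
  have hM0 : 0 ≤ M := le_trans (norm_nonneg _) (hM 0 ⟨le_refl 0, hT.le⟩)
  set F : ℝ → ℝ → X :=
    fun τ => (Ioc 0 τ).indicator (fun u => (u ^ (α - 1) / Real.Gamma α) • w (τ - u)) with hF
  have hEq : ∀ τ ∈ Ioc (0:ℝ) T, fracInt α w τ = ∫ u in Ioc 0 T, F τ u := by
    intro τ hτ
    have h1 : (∫ s in (0:ℝ)..τ, ((τ - s) ^ (α - 1) / Real.Gamma α) • w s)
        = ∫ u in (0:ℝ)..τ, (u ^ (α - 1) / Real.Gamma α) • w (τ - u) := by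
      have h2 := intervalIntegral.integral_comp_sub_left
        (fun u => (u ^ (α - 1) / Real.Gamma α) • w (τ - u)) τ (a := 0) (b := τ)
      rw [sub_self, sub_zero] at h2
      rw [← h2]
      simp [sub_sub_cancel]
    have h3 : fracInt α w τ = ∫ u in Ioc 0 τ, (u ^ (α - 1) / Real.Gamma α) • w (τ - u) := by
      unfold fracInt
      rw [← intervalIntegral.integral_of_le hτ.1.le, h1,
        intervalIntegral.integral_of_le hτ.1.le]
    rw [h3, hF]
    rw [setIntegral_indicator measurableSet_Ioc, Ioc_inter_Ioc, max_self,
      min_eq_right hτ.2]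
  have hC : ContinuousAt (fun τ => ∫ u in Ioc 0 T, F τ u) t := by
    apply continuousAt_of_dominated (bound := fun u => u ^ (α - 1) * (M / Real.Gamma α))
    · filter_upwards [Ioo_mem_nhds ht.1 ht.2] with τ hτ
      rw [hF, aestronglyMeasurable_indicator_iff measurableSet_Ioc,
        Measure.restrict_restrict measurableSet_Ioc, Ioc_inter_Ioc, max_self,
        min_eq_left hτ.2.le]
      have hcont : ContinuousOn (fun u => (u ^ (α - 1) / Real.Gamma α) • w (τ - u))
          (Ioc 0 τ) := by
        refine ContinuousOn.smul ?_ ?_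
        · exact ContinuousOn.div_const (fun u hu =>
            (Real.continuousAt_rpow_const u (α - 1) (Or.inl hu.1.ne')).continuousWithinAt) _
        · refine hw.comp ((continuous_const.sub continuous_id).continuousOn) ?_
          exact fun u hu => ⟨by linarith [hu.2], by linarith [hu.1, hτ.2]⟩
      exact hcont.aestronglyMeasurable measurableSet_Ioc
    · filter_upwards [Ioo_mem_nhds ht.1 ht.2] with τ hτ
      filter_upwards [ae_restrict_mem measurableSet_Ioc] with u hu
      by_cases h : u ∈ Ioc 0 τ
      · simp only [hF]
        rw [indicator_of_mem h]
        have h1 : (0:ℝ) ≤ u ^ (α - 1) := Real.rpow_nonneg hu.1.le _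
        rw [norm_smul, Real.norm_eq_abs, abs_of_nonneg (div_nonneg h1 hΓ.le)]
        have hwb : ‖w (τ - u)‖ ≤ M := hM _ ⟨by linarith [h.2], by linarith [hu.1, hτ.2]⟩
        calc u ^ (α - 1) / Real.Gamma α * ‖w (τ - u)‖
            ≤ u ^ (α - 1) / Real.Gamma α * M :=
              mul_le_mul_of_nonneg_left hwb (div_nonneg h1 hΓ.le)
          _ = u ^ (α - 1) * (M / Real.Gamma α) := by ring
      · simp only [hF]
        rw [indicator_of_notMem h, norm_zero]
        exact mul_nonneg (Real.rpow_nonneg hu.1.le _) (div_nonneg hM0 hΓ.le)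
    · have h1 : IntegrableOn (fun u : ℝ => u ^ (α - 1)) (Ioc 0 T) := by
        rw [← intervalIntegrable_iff_integrableOn_Ioc_of_le hT.le]
        exact intervalIntegral.intervalIntegrable_rpow' (by linarith [hα.1])
      exact h1.mul_const _
    · have hne : ∀ᵐ u : ℝ ∂volume, u ≠ t := by
        rw [ae_iff]
        simp only [ne_eq, not_not, setOf_eq_eq_singleton]
        exact measure_singleton t
      filter_upwards [ae_restrict_mem measurableSet_Ioc, ae_restrict_of_ae hne] with u hu hut
      rcases lt_or_gt_of_ne hut with h | h
      · -- u < t : eventually indicator active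
        have hwc : ContinuousAt w (t - u) :=
          hw.continuousAt (Icc_mem_nhds (by linarith [hu.1]) (by linarith [hu.1, ht.2]))
        have hsubc : ContinuousAt (fun τ : ℝ => τ - u) t := (continuous_sub_right u).continuousAt
        have hc1 : ContinuousAt (fun τ : ℝ => w (τ - u)) t :=
          ContinuousAt.comp (f := fun τ : ℝ => τ - u) hwc hsubc
        have hc2 : ContinuousAt (fun τ => (u ^ (α - 1) / Real.Gamma α) • w (τ - u)) t :=
          hc1.const_smul _
        refine hc2.congr ?_
        filter_upwards [Ioi_mem_nhds h] with τ hτ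
        simp only [hF]
        rw [indicator_of_mem (show u ∈ Ioc 0 τ from ⟨hu.1, le_of_lt hτ⟩)]
      · -- t < u : eventually zero
        refine (continuousAt_const (y := (0:X))).congr ?_
        filter_upwards [Iio_mem_nhds h] with τ hτ
        simp only [hF]
        rw [indicator_of_notMem (fun hmem => absurd hmem.2 (not_le.mpr hτ))]
  refine hC.congr ?_
  filter_upwards [Ioo_mem_nhds ht.1 ht.2] with τ hτ
  exact (hEq τ ⟨hτ.1, hτ.2.le⟩).symm

lemma fracInt_succ_eq_integral {α T : ℝ} (hα : α ∈ Ioo (0:ℝ) 1) {w : ℝ → X}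
    (hw : ContinuousOn w (Icc 0 T)) {τ : ℝ} (hτ0 : 0 < τ) (hτT : τ ≤ T) :
    fracInt (α + 1) w τ = ∫ r in Ioc 0 τ, fracInt α w r := by
  obtain ⟨M, hM⟩ := isCompact_Icc.exists_bound_of_continuousOn hw
  have hΓ : 0 < Real.Gamma α := Real.Gamma_pos_of_pos hα.1
  have hΓ1 : Real.Gamma (α + 1) = α * Real.Gamma α := Real.Gamma_add_one (ne_of_gt hα.1)
  have hT : 0 < T := lt_of_lt_of_le hτ0 hτT
  have hM0 : 0 ≤ M := le_trans (norm_nonneg _) (hM 0 ⟨le_refl 0, hT.le⟩)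
  have hr1 : (-1:ℝ) < α - 1 := by linarith [hα.1]
  set μτ := volume.restrict (Ioc (0:ℝ) τ) with hμτ
  set K : ℝ × ℝ → X :=
    fun p => ((Ioc 0 p.1).indicator (fun s => ((p.1 - s) ^ (α - 1) / Real.Gamma α) • w s)) p.2
    with hK
  have hwm : AEStronglyMeasurable w μτ :=
    (hw.mono (fun x hx => ⟨hx.1.le, hx.2.trans hτT⟩)).aestronglyMeasurable measurableSet_Ioc
  -- measurability of K on the product
  have hKm : AEStronglyMeasurable K (μτ.prod μτ) := by
    have hA : MeasurableSet ({p : ℝ × ℝ | 0 < p.2} ∩ {p : ℝ × ℝ | p.2 ≤ p.1}) :=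
      (measurableSet_lt measurable_const measurable_snd).inter
        (measurableSet_le measurable_snd measurable_fst)
    have hg : AEStronglyMeasurable
        (fun p : ℝ × ℝ => ((p.1 - p.2) ^ (α - 1) / Real.Gamma α) • w p.2) (μτ.prod μτ) := by
      refine AEStronglyMeasurable.smul ?_ hwm.comp_snd
      exact (((measurable_fst.sub measurable_snd).pow_const (α - 1)).div_const
        (Real.Gamma α)).aestronglyMeasurable
    have hKeq : K = ({p : ℝ × ℝ | 0 < p.2} ∩ {p : ℝ × ℝ | p.2 ≤ p.1}).indicator
        (fun p : ℝ × ℝ => ((p.1 - p.2) ^ (α - 1) / Real.Gamma α) • w p.2) := by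
      funext p
      simp only [hK, Set.indicator_apply, mem_Ioc, mem_inter_iff, mem_setOf_eq]
    rw [hKeq]
    exact hg.indicator hA
  -- integrability of K on the product
  have hfin : volume (Ioc (0:ℝ) τ) < ⊤ := measure_Ioc_lt_top
  have hKint : Integrable K (μτ.prod μτ) := by
    rw [show K = Function.uncurry (fun r s => K (r, s)) from rfl] at hKm ⊢
    refine (integrable_prod_iff hKm).2 ⟨?_, ?_⟩
    · filter_upwards [ae_restrict_mem measurableSet_Ioc] with r hr
      have hint : IntegrableOn (fun s => ((r - s) ^ (α - 1) / Real.Gamma α) • w s)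
          (Ioc 0 r) volume :=
        integrableOn_kernel_smul hw hM hΓ hr1 hr.1.le (hr.2.trans hτT)
      have h2 : Integrable
          ((Ioc 0 r).indicator fun s => ((r - s) ^ (α - 1) / Real.Gamma α) • w s) μτ := by
        rw [integrable_indicator_iff measurableSet_Ioc]
        rw [IntegrableOn, hμτ, Measure.restrict_restrict measurableSet_Ioc, Ioc_inter_Ioc,
          max_self, min_eq_left hr.2]
        exact hint
      exact h2
    · refine Integrable.mono' (g := fun _ => M / Real.Gamma α * (T ^ α / α))
        (integrableOn_const hfin.ne) hKm.norm.integral_prod_right' ?_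
      filter_upwards [ae_restrict_mem measurableSet_Ioc] with r hr
      have h1 : (fun s => ‖K (r, s)‖)
          = (Ioc 0 r).indicator fun s => ‖((r - s) ^ (α - 1) / Real.Gamma α) • w s‖ := by
        funext s
        simp only [hK]
        exact norm_indicator_eq_indicator_norm _ _
      have h2 : ∫ s, ‖K (r, s)‖ ∂μτ
          = ∫ s in Ioc 0 r, ‖((r - s) ^ (α - 1) / Real.Gamma α) • w s‖ := by
        rw [h1, hμτ, setIntegral_indicator measurableSet_Ioc, Ioc_inter_Ioc, max_self,
          min_eq_right hr.2]
      have h3 : ∫ s in Ioc 0 r, ‖((r - s) ^ (α - 1) / Real.Gamma α) • w s‖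
          ≤ ∫ s in Ioc 0 r, (r - s) ^ (α - 1) * (M / Real.Gamma α) := by
        refine integral_mono_of_nonneg (Filter.Eventually.of_forall fun s => norm_nonneg _)
          ((integrableOn_rpow_sub hr1 hr.1.le).mul_const _) ?_
        filter_upwards [ae_restrict_mem measurableSet_Ioc] with s hs
        have hp : (0:ℝ) ≤ (r - s) ^ (α - 1) := Real.rpow_nonneg (by linarith [hs.2]) _
        rw [norm_smul, Real.norm_eq_abs, abs_of_nonneg (div_nonneg hp hΓ.le)]
        calc (r - s) ^ (α - 1) / Real.Gamma α * ‖w s‖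
            ≤ (r - s) ^ (α - 1) / Real.Gamma α * M :=
              mul_le_mul_of_nonneg_left
                (hM s ⟨hs.1.le, le_trans hs.2 (hr.2.trans hτT)⟩) (div_nonneg hp hΓ.le)
          _ = (r - s) ^ (α - 1) * (M / Real.Gamma α) := by ring
      have h4 : ∫ s in Ioc 0 r, (r - s) ^ (α - 1) * (M / Real.Gamma α)
          = M / Real.Gamma α * (r ^ α / α) := by
        rw [MeasureTheory.integral_mul_const, integral_rpow_sub hr1 hr.1.le, sub_add_cancel]
        ring
      have h5 : M / Real.Gamma α * (r ^ α / α) ≤ M / Real.Gamma α * (T ^ α / α) := by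
        have : r ^ α ≤ T ^ α :=
          Real.rpow_le_rpow hr.1.le (hr.2.trans hτT) hα.1.le
        exact mul_le_mul_of_nonneg_left ((div_le_div_iff_of_pos_right hα.1).2 this)
          (div_nonneg hM0 hΓ.le)
      simp only [Function.uncurry_apply_pair]
      rw [Real.norm_eq_abs, abs_of_nonneg (integral_nonneg fun s => norm_nonneg _), h2]
      exact le_trans h3 (le_trans (le_of_eq h4) h5)
  -- Fubini
  have hswap : (∫ r, ∫ s, K (r, s) ∂μτ ∂μτ) = ∫ s, ∫ r, K (r, s) ∂μτ ∂μτ :=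
    integral_integral_swap hKint
  -- left side is ∫ fracInt α w
  have hL : (∫ r, ∫ s, K (r, s) ∂μτ ∂μτ) = ∫ r in Ioc 0 τ, fracInt α w r := by
    rw [hμτ]
    refine integral_congr_ae ?_
    filter_upwards [ae_restrict_mem measurableSet_Ioc] with r hr
    simp only [hK]
    rw [setIntegral_indicator measurableSet_Ioc, Ioc_inter_Ioc, max_self,
      min_eq_right hr.2]
    rfl
  -- right side is fracInt (α+1) w τ
  have hR : (∫ s, ∫ r, K (r, s) ∂μτ ∂μτ) = fracInt (α + 1) w τ := by
    rw [hμτ]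
    unfold fracInt
    refine integral_congr_ae ?_
    filter_upwards [ae_restrict_mem measurableSet_Ioc] with s hs
    have hptwise : ∀ r : ℝ, K (r, s)
        = (Ici s).indicator (fun r => ((r - s) ^ (α - 1) / Real.Gamma α) • w s) r := by
      intro r
      simp only [hK, Set.indicator_apply, mem_Ioc, mem_Ici]
      by_cases h : s ≤ r
      · simp [h, hs.1]
      · simp [h]
    have hset : Ioc 0 τ ∩ Ici s = Icc s τ := by
      ext r
      simp only [mem_inter_iff, mem_Ioc, mem_Ici, mem_Icc]
      constructor
      · rintro ⟨⟨_, h2⟩, h3⟩; exact ⟨h3, h2⟩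
      · rintro ⟨h1', h2'⟩; exact ⟨⟨lt_of_lt_of_le hs.1 h1', h2'⟩, h1'⟩
    calc (∫ r, K (r, s) ∂μτ)
        = ∫ r in Ioc 0 τ, (Ici s).indicator
            (fun r => ((r - s) ^ (α - 1) / Real.Gamma α) • w s) r := by
          exact integral_congr_ae (Filter.Eventually.of_forall fun r => hptwise r)
      _ = ∫ r in Icc s τ, ((r - s) ^ (α - 1) / Real.Gamma α) • w s := by
          rw [setIntegral_indicator measurableSet_Ici, hset]
      _ = (∫ r in Icc s τ, (r - s) ^ (α - 1) / Real.Gamma α) • w s := by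
          rw [integral_smul_const]
      _ = ((τ - s) ^ (α + 1 - 1) / Real.Gamma (α + 1)) • w s := by
          congr 1
          rw [integral_Icc_eq_integral_Ioc, ← intervalIntegral.integral_of_le hs.2]
          rw [show (fun r => (r - s) ^ (α - 1) / Real.Gamma α)
              = (fun r => ((r - s) ^ (α - 1)) / Real.Gamma α) from rfl]
          rw [intervalIntegral.integral_div]
          rw [intervalIntegral.integral_comp_sub_right (fun x : ℝ => x ^ (α - 1)) s,
            sub_self, integral_rpow (Or.inl hr1), sub_add_cancel,
            Real.zero_rpow (ne_of_gt hα.1), sub_zero, hΓ1, add_sub_cancel_right]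
          field_simp
  rw [← hR, ← hswap, hL]

end Main

/-- The identity (eq:uz): if `J^α w` and `J^α(s ↦ s w(s))` are differentiable at
`t ∈ (0,T)`, then `(d/dt) J^α(s ↦ s w(s))(t) = t (d/dt)(J^α w)(t) + (1-α)(J^α w)(t)`. -/
theorem deriv_fracInt_mul_eq
    {X : Type*} [NormedAddCommGroup X] [NormedSpace ℝ X] [CompleteSpace X]
    (α T : ℝ) (hα : α ∈ Ioo (0:ℝ) 1) (hT : 0 < T)
    (w : ℝ → X) (hw : ContinuousOn w (Icc 0 T))
    (t : ℝ) (ht : t ∈ Ioo (0:ℝ) T)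
    (D D' : X)
    (hD : HasDerivAt (fracInt α w) D t)
    (hD' : HasDerivAt (fracInt α (fun s => s • w s)) D' t) :
    D' = t • D + (1 - α) • fracInt α w t := by
  obtain ⟨ht0, htT⟩ := ht
  obtain ⟨M, hM⟩ := isCompact_Icc.exists_bound_of_continuousOn hw
  have hM0 : 0 ≤ M := le_trans (norm_nonneg _) (hM 0 ⟨le_refl 0, hT.le⟩)
  have hΓ : 0 < Real.Gamma α := Real.Gamma_pos_of_pos hα.1
  have hr1 : (-1:ℝ) < α - 1 := by linarith [hα.1]
  set G : ℝ → X := fracInt α w with hG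
  set c : ℝ := t / 2 with hc
  have hc0 : 0 < c := by rw [hc]; linarith
  have hct : c < t := by rw [hc]; linarith
  have hGat : ∀ x ∈ Ioo (0:ℝ) T, ContinuousAt G x := fun x hx => continuousAt_fracInt hα hw hx
  have hGcont : ContinuousOn G (Ioo 0 T) := fun x hx => (hGat x hx).continuousWithinAt
  -- G is integrable on Ioc 0 τ for τ < T
  have hGbdd : ∀ r ∈ Ioc (0:ℝ) T, ‖G r‖ ≤ M / Real.Gamma α * (T ^ α / α) := by
    intro r hr
    have h1 := norm_integral_kernel_le (r := α - 1) hw hM hΓ hr1 hr.1.le hr.2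
    rw [sub_add_cancel] at h1
    refine le_trans h1 ?_
    have : r ^ α ≤ T ^ α := Real.rpow_le_rpow hr.1.le hr.2 hα.1.le
    exact mul_le_mul_of_nonneg_left ((div_le_div_iff_of_pos_right hα.1).2 this)
      (div_nonneg hM0 hΓ.le)
  have hGint : ∀ τ ∈ Ioo (0:ℝ) T, IntegrableOn G (Ioc 0 τ) := by
    intro τ hτ
    have hsub : Ioc 0 τ ⊆ Ioo 0 T := fun x hx => ⟨hx.1, lt_of_le_of_lt hx.2 hτ.2⟩
    have hmeas : AEStronglyMeasurable G (volume.restrict (Ioc 0 τ)) :=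
      (hGcont.aestronglyMeasurable measurableSet_Ioo).mono_measure
        (Measure.restrict_mono hsub le_rfl)
    refine Integrable.mono' (g := fun _ => M / Real.Gamma α * (T ^ α / α))
      (integrableOn_const measure_Ioc_lt_top.ne) hmeas ?_
    filter_upwards [ae_restrict_mem measurableSet_Ioc] with r hr
    exact hGbdd r ⟨hr.1, le_trans hr.2 hτ.2.le⟩
  -- FTC
  have hGiv : IntervalIntegrable G volume c t := by
    apply ContinuousOn.intervalIntegrable
    rw [uIcc_of_le hct.le]
    exact hGcont.mono fun x hx => ⟨lt_of_lt_of_le hc0 hx.1, lt_of_le_of_lt hx.2 htT⟩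
  have hmeasat : StronglyMeasurableAtFilter G (𝓝 t) volume :=
    ⟨Ioo 0 T, Ioo_mem_nhds ht0 htT, hGcont.aestronglyMeasurable measurableSet_Ioo⟩
  have hΦ : HasDerivAt (fun τ => ∫ x in c..τ, G x) (G t) t :=
    intervalIntegral.integral_hasDerivAt_right hGiv hmeasat (hGat t ⟨ht0, htT⟩)
  -- the auxiliary function and its derivative
  have h1 : HasDerivAt (fun τ : ℝ => τ • G τ) (t • D + (1:ℝ) • G t) t :=
    (hasDerivAt_id t).smul hD
  have h2 : HasDerivAt (fun τ => (∫ x in Ioc 0 c, G x) + ∫ x in c..τ, G x) (G t) t :=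
    hΦ.const_add _
  have hRHS : HasDerivAt
      (fun τ => τ • G τ - α • ((∫ x in Ioc 0 c, G x) + ∫ x in c..τ, G x))
      ((t • D + (1:ℝ) • G t) - α • G t) t := h1.sub (h2.const_smul α)
  -- eventual equality with fracInt α (s • w)
  have hev : (fracInt α (fun s => s • w s)) =ᶠ[𝓝 t]
      (fun τ => τ • G τ - α • ((∫ x in Ioc 0 c, G x) + ∫ x in c..τ, G x)) := by
    filter_upwards [Ioo_mem_nhds hct htT] with τ hτ
    have hτ0 : 0 < τ := lt_trans hc0 hτ.1
    have hτT : τ < T := hτ.2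
    have hsplit : (∫ x in Ioc 0 τ, G x) = (∫ x in Ioc 0 c, G x) + ∫ x in c..τ, G x := by
      have hi1 : IntervalIntegrable G volume 0 c := by
        rw [intervalIntegrable_iff_integrableOn_Ioc_of_le hc0.le]
        exact (hGint τ ⟨hτ0, hτT⟩).mono_set (Ioc_subset_Ioc_right hτ.1.le)
      have hi2 : IntervalIntegrable G volume c τ := by
        rw [intervalIntegrable_iff_integrableOn_Ioc_of_le hτ.1.le]
        exact (hGint τ ⟨hτ0, hτT⟩).mono_set (Ioc_subset_Ioc_left hc0.le)
      rw [← intervalIntegral.integral_of_le hτ0.le,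
        ← intervalIntegral.integral_of_le hc0.le,
        intervalIntegral.integral_add_adjacent_intervals hi1 hi2]
    rw [fracInt_mul_eq hα hw hτ0 hτT.le, fracInt_succ_eq_integral hα hw hτ0 hτT.le,
      ← hG, hsplit]
  have huniq : D' = (t • D + (1:ℝ) • G t) - α • G t :=
    hD'.unique (hRHS.congr_of_eventuallyEq hev)
  rw [huniq, one_smul, sub_smul, one_smul]
  abel
end
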